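/- Let 𝒞 ⊆ ℝ^d be an open set and 𝒟 = {q₁,…,q_N} ⊆ ℝ^d. If 𝒟 is a sufficient decision dataset for 𝒞 and 𝒳, then Δ(𝒳,𝒞) ⊆ span 𝒟. -/
import Mathlib


open scoped RealInnerProductSpace

noncomputable section

abbrev Vec (d : ℕ) := EuclideanSpace ℝ (Fin d)

/-- The feasible set 𝒳 = {x : Ax = b, x ≥ 0}. -/
def feasibleSet {d m : ℕ} (A : Matrix (Fin m) (Fin d) ℝ) (b : Fin m → ℝ) : Set (Vec d) :=
  {x | A.mulVec x = b ∧ ∀ i, 0 ≤ x i}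

/-- argmin_{x ∈ X} c⊤x. -/
def argminSet {d : ℕ} (X : Set (Vec d)) (c : Vec d) : Set (Vec d) :=
  {x | x ∈ X ∧ ∀ y ∈ X, ⟪c, x⟫ ≤ ⟪c, y⟫}

/-- 𝒟 = {q 1, …, q N} is a sufficient decision dataset for 𝒞 and 𝒳. -/
def SufficientDataset {d N : ℕ} (C : Set (Vec d)) (X : Set (Vec d)) (q : Fin N → Vec d) : Prop :=
  ∃ Xhat : (Fin N → ℝ) → Set (Vec d),
    ∀ c ∈ C, Xhat (fun i => ⟪c, q i⟫) = argminSet X c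

/-- Extreme points of X. -/
def extremePts {d : ℕ} (X : Set (Vec d)) : Set (Vec d) :=
  {x | x ∈ X ∧ ¬ ∃ (l : ℝ) (y z : Vec d), y ∈ X ∧ z ∈ X ∧ y ≠ z ∧
    l ∈ Set.Ioo (0:ℝ) 1 ∧ x = l • y + (1 - l) • z}

/-- Feasible directions from x in X. -/
def FD {d : ℕ} (X : Set (Vec d)) (x : Vec d) : Set (Vec d) :=
  {δ | ∃ ε : ℝ, 0 < ε ∧ x + ε • δ ∈ X}

/-- Extreme directions of FD(x). -/
def extremeDirs {d : ℕ} (X : Set (Vec d)) (x : Vec d) : Set (Vec d) :=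
  {δ | δ ∈ FD X x ∧ δ ≠ 0 ∧ ¬ ∃ (l : ℝ) (δ₁ δ₂ : Vec d), δ₁ ∈ FD X x ∧ δ₂ ∈ FD X x ∧
    (∀ t : ℝ, δ₁ ≠ t • δ₂) ∧ l ∈ Set.Ioo (0:ℝ) 1 ∧ δ = l • δ₁ + (1 - l) • δ₂}

/-- Optimality cone Λ(x). -/
def Lam {d : ℕ} (X : Set (Vec d)) (x : Vec d) : Set (Vec d) :=
  {c | x ∈ argminSet X c}

/-- The face F(x, δ) = Λ(x) ∩ {δ}^⊥. -/
def faceF {d : ℕ} (X : Set (Vec d)) (x δ : Vec d) : Set (Vec d) :=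
  Lam X x ∩ {c | ⟪c, δ⟫ = 0}

/-- Relevant extreme directions Δ(𝒳, 𝒞). -/
def DeltaSet {d : ℕ} (X C : Set (Vec d)) : Set (Vec d) :=
  {δ | ∃ x ∈ extremePts X, δ ∈ extremeDirs X x ∧ (faceF X x δ ∩ C).Nonempty}

/-- F₀: the span of the canonical basis vectors eᵢ with xᵢ ≠ 0 for some x ∈ X. -/
def F0 {d : ℕ} (X : Set (Vec d)) : Submodule ℝ (Vec d) :=
  Submodule.span ℝ {v | ∃ i : Fin d, (∃ x ∈ X, x i ≠ 0) ∧ v = EuclideanSpace.single i 1}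

/-- Ker A as a submodule of ℝ^d. -/
def kerA {d m : ℕ} (A : Matrix (Fin m) (Fin d) ℝ) : Submodule ℝ (Vec d) :=
  LinearMap.ker ((Matrix.mulVecLin A).comp (WithLp.linearEquiv 2 ℝ (Fin d → ℝ)).toLinearMap)

/-- Reachable optimal solutions 𝒳*(𝒞). -/
def reachable {d : ℕ} (X C : Set (Vec d)) : Set (Vec d) := ⋃ c ∈ C, argminSet X c

/-- dir(𝒳*(𝒞)) = span of differences of reachable solutions. -/
def dirSpan {d : ℕ} (X C : Set (Vec d)) : Submodule ℝ (Vec d) :=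
  Submodule.span ℝ {v | ∃ x₁ ∈ reachable X C, ∃ x₂ ∈ reachable X C, v = x₁ - x₂}

/-- 𝒞-strong neighbors. -/
def StrongNeighbors {d : ℕ} (X C : Set (Vec d)) (x₁ x₂ : Vec d) : Prop :=
  x₂ - x₁ ∈ extremeDirs X x₁ ∧ ∃ c ∈ C, x₁ ∈ argminSet X c ∧ x₂ ∈ argminSet X c

/-- Y is 𝒞-strongly connected by neighboring extreme points. -/
def StronglyConnected {d : ℕ} (X C Y : Set (Vec d)) : Prop :=
  ∀ x ∈ Y, ∀ x' ∈ Y, ∃ (h : ℕ) (seq : Fin (h + 1) → Vec d),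
    (∀ i, seq i ∈ Y) ∧ seq 0 = x ∧ seq (Fin.last h) = x' ∧
    ∀ i : Fin h, StrongNeighbors X C (seq i.castSucc) (seq i.succ)

/-- for an open uncertainty set 𝒞, sufficiency of 𝒟 implies
Δ(𝒳,𝒞) ⊆ span 𝒟. -/
theorem stmt9 {d m N : ℕ} (A : Matrix (Fin m) (Fin d) ℝ) (b : Fin m → ℝ)
    (hne : (feasibleSet A b).Nonempty) (hbdd : Bornology.IsBounded (feasibleSet A b))
    (C : Set (Vec d)) (hCopen : IsOpen C)
    (q : Fin N → Vec d)
    (hsuff : SufficientDataset C (feasibleSet A b) q) :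
    DeltaSet (feasibleSet A b) C ⊆ ↑(Submodule.span ℝ (Set.range q)) := by
  intro δ hδ
  by_contra hspan
  obtain ⟨x, hx, hδd, c, hcF, hcC⟩ :
      ∃ x, x ∈ extremePts (feasibleSet A b) ∧ δ ∈ extremeDirs (feasibleSet A b) x ∧
        ∃ c, c ∈ faceF (feasibleSet A b) x δ ∧ c ∈ C := by
    obtain ⟨x, hx, hδd, ⟨c, hc⟩⟩ := hδ
    exact ⟨x, hx, hδd, c, hc.1, hc.2⟩
  set X := feasibleSet A b with hX
  -- x is optimal for c and ⟪c, δ⟫ = 0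
  have hxopt : x ∈ argminSet X c := hcF.1
  have hcδ : ⟪c, δ⟫ = 0 := hcF.2
  -- feasible direction
  obtain ⟨ε₀, hε₀, hy⟩ : ∃ ε₀ : ℝ, 0 < ε₀ ∧ x + ε₀ • δ ∈ X := hδd.1
  set y := x + ε₀ • δ with hydef
  -- a vector u ⊥ span(range q) with ⟪u, δ⟫ > 0
  set K := Submodule.span ℝ (Set.range q) with hK
  have horth : Kᗮᗮ = K := Submodule.orthogonal_orthogonal K
  obtain ⟨u, huK, huδ⟩ : ∃ u ∈ Kᗮ, ⟪u, δ⟫ ≠ 0 := by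
    by_contra h
    push_neg at h
    exact hspan (horth ▸ (Submodule.mem_orthogonal Kᗮ δ).mpr h)
  obtain ⟨u, huK, huδ⟩ : ∃ u ∈ Kᗮ, 0 < ⟪u, δ⟫ := by
    rcases huδ.lt_or_gt with h | h
    · exact ⟨-u, Kᗮ.neg_mem huK, by simpa [inner_neg_left] using h⟩
    · exact ⟨u, huK, h⟩
  have huq : ∀ i, ⟪u, q i⟫ = 0 := fun i => by
    rw [real_inner_comm]
    exact (Submodule.mem_orthogonal K u).mp huK (q i) (Submodule.subset_span ⟨i, rfl⟩)
  have hu0 : u ≠ 0 := fun h => by simp [h] at huδ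
  -- small perturbation staying in C
  obtain ⟨ε, hε, hball⟩ := Metric.isOpen_iff.mp hCopen c hcC
  set t := ε / (2 * ‖u‖) with ht
  have hupos : (0:ℝ) < ‖u‖ := norm_pos_iff.mpr hu0
  have htpos : 0 < t := div_pos hε (by linarith)
  have htu : ‖t • u‖ < ε := by
    rw [norm_smul, Real.norm_eq_abs, abs_of_pos htpos, ht, div_mul_eq_mul_div,
      div_lt_iff₀ (by linarith : (0:ℝ) < 2 * ‖u‖)]
    nlinarith
  have hcp : c + t • u ∈ C := by
    apply hball
    simp only [Metric.mem_ball, dist_eq_norm, add_sub_cancel_left]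
    exact htu
  have hcm : c - t • u ∈ C := by
    apply hball
    simp only [Metric.mem_ball, dist_eq_norm, sub_sub_cancel_left, norm_neg]
    exact htu
  -- sufficiency implies the two argmin sets coincide
  obtain ⟨Xhat, hXhat⟩ := hsuff
  have hsame : argminSet X (c + t • u) = argminSet X (c - t • u) := by
    have hfun : (fun i => ⟪c + t • u, q i⟫) = fun i => ⟪c - t • u, q i⟫ := by
      funext i
      rw [inner_add_left, inner_sub_left, real_inner_smul_left, huq i]
      ring
    rw [← hXhat _ hcp, ← hXhat _ hcm, hfun]
  -- argmin of c + t•u is nonempty by compactness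
  have hXclosed : IsClosed X := by
    have h1 : IsClosed {x : Vec d | A.mulVec x = b} := by
      have hcont : Continuous fun x : Vec d => A.mulVec x :=
        ((Matrix.mulVecLin A).comp
          (WithLp.linearEquiv 2 ℝ (Fin d → ℝ)).toLinearMap).continuous_of_finiteDimensional
      exact isClosed_eq hcont continuous_const
    have h2 : IsClosed {x : Vec d | ∀ i, 0 ≤ x i} := by
      have : {x : Vec d | ∀ i, 0 ≤ x i} = ⋂ i, {x : Vec d | 0 ≤ x i} := by
        ext z; simp
      rw [this]
      exact isClosed_iInter fun i =>
        isClosed_le continuous_const (EuclideanSpace.proj i).continuous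
    exact h1.inter h2
  have hXcpt : IsCompact X := Metric.isCompact_of_isClosed_isBounded hXclosed hbdd
  obtain ⟨z, hzX, hzmin⟩ := hXcpt.exists_isMinOn (f := fun w : Vec d => ⟪c + t • u, w⟫)
    hne (Continuous.continuousOn (Continuous.inner continuous_const continuous_id))
  have hzp : z ∈ argminSet X (c + t • u) := ⟨hzX, fun w hw => hzmin hw⟩
  have hzm : z ∈ argminSet X (c - t • u) := hsame ▸ hzp
  -- derive the contradiction
  have h1 : ⟪c + t • u, z⟫ ≤ ⟪c + t • u, x⟫ := hzp.2 x hxopt.1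
  have h2 : ⟪c - t • u, z⟫ ≤ ⟪c - t • u, y⟫ := hzm.2 y hy
  have hcy : ⟪c, y⟫ = ⟪c, x⟫ := by
    rw [hydef, inner_add_right, real_inner_smul_right, hcδ]; ring
  have huy : ⟪u, y⟫ = ⟪u, x⟫ + ε₀ * ⟪u, δ⟫ := by
    rw [hydef, inner_add_right, real_inner_smul_right]
  have hcxz : ⟪c, x⟫ ≤ ⟪c, z⟫ := hxopt.2 z hzX
  have e1 : ⟪c, z⟫ + t * ⟪u, z⟫ ≤ ⟪c, x⟫ + t * ⟪u, x⟫ := by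
    simp only [inner_add_left, real_inner_smul_left] at h1
    exact h1
  have e2 : ⟪c, z⟫ - t * ⟪u, z⟫ ≤ ⟪c, x⟫ - t * ⟪u, x⟫ - t * (ε₀ * ⟪u, δ⟫) := by
    simp only [inner_sub_left, real_inner_smul_left, hcy, huy] at h2
    linarith
  nlinarith [mul_pos htpos (mul_pos hε₀ huδ)]
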